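/- Let n ≥ 3, let a, b, c ∈ ℝ with a ≠ 0, b ≠ 0, c ≠ b and c ≠ −b, and let Y ∈ M_n(ℝ) be the diagonal matrix with Y_{ii} = b for i = 1, …, n−1 and Y_{nn} = c. Then the set {a·k + u Y vᵀ : k, u, v ∈ SO(n)} has empty interior in M_n(ℝ). (This is the exceptional pair of types (SU(n), SU(n−1)) in the symmetric space SO_0(n,n)/SO(n)×SO(n), whose restricted root system is of type D_n: the corresponding convolution of orbital measures is singular.) -/

import Mathlib

/- STATEMENT 15: Let n ≥ 3, a ≠ 0, b ≠ 0, c ≠ b, c ≠ −b, and Y ∈ M_n(ℝ) the diagonal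
matrix with Y_ii = b for i = 1, …, n−1 and Y_nn = c. Then
{a·k + u Y vᵀ : k, u, v ∈ SO(n)} has empty interior in M_n(ℝ). -/

open Matrix

namespace ExceptionalPairAux

open Set Module
open scoped ENNReal NNReal

attribute [local instance] Matrix.normedAddCommGroup Matrix.normedSpace

section helpers
variable {E : Type*} [NormedAddCommGroup E] [NormedSpace ℝ E] {N : ℕ}

lemma contDiff_det' {f : E → Matrix (Fin N) (Fin N) ℝ}
    (h : ∀ i j, ContDiff ℝ 1 fun x => f x i j) :
    ContDiff ℝ 1 fun x => (f x).det := by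
  simp_rw [Matrix.det_apply, Units.smul_def, zsmul_eq_mul]
  exact ContDiff.sum fun σ _ => contDiff_const.mul (contDiff_prod fun i _ => h _ _)

lemma contDiff_mul_entry {f g : E → Matrix (Fin N) (Fin N) ℝ}
    (hf : ∀ i j, ContDiff ℝ 1 fun x => f x i j)
    (hg : ∀ i j, ContDiff ℝ 1 fun x => g x i j) (i j : Fin N) :
    ContDiff ℝ 1 fun x => (f x * g x) i j := by
  simp_rw [Matrix.mul_apply]
  exact ContDiff.sum fun k _ => (hf i k).mul (hg k j)

lemma contDiff_adjugate_entry {f : E → Matrix (Fin N) (Fin N) ℝ}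
    (h : ∀ i j, ContDiff ℝ 1 fun x => f x i j) (i j : Fin N) :
    ContDiff ℝ 1 fun x => (f x).adjugate i j := by
  simp_rw [Matrix.adjugate_apply]
  refine contDiff_det' fun p q => ?_
  simp_rw [Matrix.updateRow_apply]
  by_cases hp : p = j
  · simp only [hp, if_true]; exact contDiff_const
  · simp only [if_neg hp]; exact h p q

end helpers

section skew
variable {N : ℕ}

abbrev skewIdx (N : ℕ) : Type := Σ i : Fin N, Fin i.val

def skewMap (x : skewIdx N → ℝ) : Matrix (Fin N) (Fin N) ℝ :=
  Matrix.of fun i j =>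
    if h : (j : ℕ) < (i : ℕ) then x ⟨i, ⟨j, h⟩⟩
    else if h' : (i : ℕ) < (j : ℕ) then - x ⟨j, ⟨i, h'⟩⟩ else 0

lemma contDiff_skewMap_entry (i j : Fin N) :
    ContDiff ℝ 1 fun x : skewIdx N → ℝ => skewMap x i j := by
  unfold skewMap
  simp only [Matrix.of_apply]
  split_ifs
  · exact contDiff_apply _ _ _
  · exact (contDiff_apply _ _ _).neg
  · exact contDiff_const

lemma skewMap_surj (A : Matrix (Fin N) (Fin N) ℝ) (hA : Aᵀ = -A) :
    ∃ x, skewMap x = A := by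
  refine ⟨fun p => A p.1 ⟨p.2.val, lt_trans p.2.isLt p.1.isLt⟩, ?_⟩
  have hskew : ∀ i j, A j i = - A i j := fun i j => by
    have := congrFun (congrFun hA i) j
    simpa [Matrix.transpose_apply] using this
  ext i j
  unfold skewMap
  simp only [Matrix.of_apply]
  simp only [Fin.eta]
  split_ifs with h h'
  · rfl
  · linarith [hskew i j]
  · have : i = j := Fin.ext (by omega)
    subst this
    linarith [hskew i i]

noncomputable def cmap (g A : Matrix (Fin N) (Fin N) ℝ) : Matrix (Fin N) (Fin N) ℝ :=
  ((1 + A).det)⁻¹ • (g * ((1 - A) * (1 + A).adjugate))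

lemma cmap_surj (g w : Matrix (Fin N) (Fin N) ℝ) (hg : gᵀ * g = 1) (hw : wᵀ * w = 1)
    (hdet : (1 + gᵀ * w).det ≠ 0) :
    ∃ A : Matrix (Fin N) (Fin N) ℝ, Aᵀ = -A ∧ (1 + A).det ≠ 0 ∧ cmap g A = w := by
  have hggT : g * gᵀ = 1 := mul_eq_one_comm.mp hg
  set u := gᵀ * w with hu_def
  have hu : uᵀ * u = 1 := by
    calc uᵀ * u = wᵀ * (g * gᵀ) * w := by
          simp only [hu_def, Matrix.transpose_mul, Matrix.transpose_transpose, Matrix.mul_assoc]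
      _ = 1 := by rw [hggT, Matrix.mul_one, hw]
  set B := 1 + u with hB_def
  have hB : IsUnit B.det := isUnit_iff_ne_zero.2 hdet
  have hBB : B * B⁻¹ = 1 := Matrix.mul_nonsing_inv _ hB
  have hBB' : B⁻¹ * B = 1 := Matrix.nonsing_inv_mul _ hB
  have hBt : IsUnit (Bᵀ).det := by rw [Matrix.det_transpose]; exact hB
  have hBtB : Bᵀ * B = Bᵀ + B := by
    have h1 : Bᵀ * B = 1 + u + uᵀ + uᵀ * u := by
      simp only [hB_def, Matrix.transpose_add, Matrix.transpose_one, add_mul, mul_add,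
        Matrix.one_mul, Matrix.mul_one]
      abel
    rw [h1, hu]
    simp only [hB_def, Matrix.transpose_add, Matrix.transpose_one]
    abel
  have hinvsum : (Bᵀ)⁻¹ + B⁻¹ = 1 := by
    have h1 : (Bᵀ)⁻¹ * (Bᵀ * B) * B⁻¹ = 1 := by
      rw [← Matrix.mul_assoc, Matrix.nonsing_inv_mul _ hBt, Matrix.one_mul, hBB]
    have h2 : (Bᵀ)⁻¹ * (Bᵀ + B) * B⁻¹ = (Bᵀ)⁻¹ + B⁻¹ := by
      rw [mul_add, Matrix.nonsing_inv_mul _ hBt, add_mul, Matrix.one_mul,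
        Matrix.mul_assoc, hBB, Matrix.mul_one]
      abel
    rw [hBtB, h2] at h1
    exact h1
  set A := (2:ℝ) • B⁻¹ - 1 with hA_def
  have hAt : Aᵀ = -A := by
    have ht : (B⁻¹)ᵀ = (Bᵀ)⁻¹ := Matrix.transpose_nonsing_inv _
    have hts : (Bᵀ)⁻¹ = 1 - B⁻¹ := by rw [← hinvsum]; abel
    simp only [hA_def, Matrix.transpose_sub, Matrix.transpose_smul, Matrix.transpose_one, ht, hts]
    rw [smul_sub]
    module
  have h1A : 1 + A = (2:ℝ) • B⁻¹ := by rw [hA_def]; abel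
  have hdetA : (1 + A).det ≠ 0 := by
    rw [h1A, Matrix.det_smul, Matrix.det_nonsing_inv]
    simp only [Ring.inverse_eq_inv']
    have : B.det ≠ 0 := hdet
    positivity
  refine ⟨A, hAt, hdetA, ?_⟩
  have key : 1 - A = u * (1 + A) := by
    have hu' : u = B - 1 := by rw [hB_def]; abel
    rw [h1A, hu', sub_mul, Matrix.mul_smul, hBB, Matrix.one_mul, hA_def]
    module
  unfold cmap
  rw [key, Matrix.mul_assoc, Matrix.mul_adjugate, Matrix.mul_smul, Matrix.mul_one,
    Matrix.mul_smul, smul_smul, inv_mul_cancel₀ hdetA, one_smul, ← Matrix.mul_assoc, hggT,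
    Matrix.one_mul]

end skew

section sphere
variable {m : ℕ}

noncomputable def st (z : Fin m → ℝ) : Fin (m + 1) → ℝ := fun i =>
  (1 + ∑ j, z j ^ 2)⁻¹ * (if h : i = Fin.last m then (∑ j, z j ^ 2) - 1 else 2 * z (i.castPred h))

lemma st_denom_pos (z : Fin m → ℝ) : 0 < 1 + ∑ j, z j ^ 2 := by positivity

lemma contDiff_st_entry (i : Fin (m + 1)) : ContDiff ℝ 1 fun z : Fin m → ℝ => st z i := by
  have hQ : ContDiff ℝ 1 fun z : Fin m → ℝ => ∑ j, z j ^ 2 :=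
    ContDiff.sum fun j _ => (contDiff_apply ℝ ℝ j).pow 2
  have hinv : ContDiff ℝ 1 fun z : Fin m → ℝ => (1 + ∑ j, z j ^ 2)⁻¹ := by
    rw [contDiff_iff_contDiffAt]
    intro z
    exact (contDiffAt_inv ℝ (ne_of_gt (st_denom_pos z))).comp z
      ((contDiff_const.add hQ).contDiffAt)
  unfold st
  by_cases h : i = Fin.last m
  · simp only [h, dif_pos]
    exact hinv.mul (hQ.sub contDiff_const)
  · simp only [dif_neg h]
    exact hinv.mul (contDiff_const.mul (contDiff_apply ℝ ℝ _))

lemma st_surj (y : Fin (m + 1) → ℝ) (hy : ∑ i, y i ^ 2 = 1) (hl : y (Fin.last m) ≠ 1) :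
    ∃ z, st z = y := by
  set t := y (Fin.last m) with ht
  have h1t : (1 : ℝ) - t ≠ 0 := fun h => hl (by linarith [sub_eq_zero.mp h])
  refine ⟨fun j => y j.castSucc / (1 - t), ?_⟩
  have hsum : ∑ j : Fin m, y j.castSucc ^ 2 = 1 - t ^ 2 := by
    have := Fin.sum_univ_castSucc (f := fun i => y i ^ 2)
    rw [this] at hy
    linarith [hy]
  have hQ : ∑ j : Fin m, (y j.castSucc / (1 - t)) ^ 2 = (1 + t) / (1 - t) := by
    have hh : ∑ j : Fin m, (y j.castSucc / (1 - t)) ^ 2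
        = (∑ j : Fin m, y j.castSucc ^ 2) / (1 - t) ^ 2 := by
      rw [Finset.sum_div]
      refine Finset.sum_congr rfl fun j _ => ?_
      field_simp
    rw [hh, hsum]
    have h2 : (1 : ℝ) - t ^ 2 = (1 - t) * (1 + t) := by ring
    rw [h2]
    field_simp
  funext i
  unfold st
  rw [hQ]
  have hden : 1 + (1 + t) / (1 - t) = 2 / (1 - t) := by field_simp; ring
  rw [hden]
  by_cases h : i = Fin.last m
  · simp only [h, dif_pos]
    rw [← ht]
    field_simp
    ring
  · simp only [dif_neg h]
    have hcp : (i.castPred h).castSucc = i := Fin.castSucc_castPred i h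
    rw [hcp]
    field_simp

end sphere

section soset
variable {N : ℕ}

def SOset (N : ℕ) : Set (Matrix (Fin N) (Fin N) ℝ) := {g | gᵀ * g = 1 ∧ g.det = 1}

lemma isCompact_SOset : IsCompact (SOset N) := by
  have hclosed : IsClosed (SOset N) := by
    have h1 : IsClosed {g : Matrix (Fin N) (Fin N) ℝ | gᵀ * g = 1} :=
      isClosed_eq ((continuous_id.matrix_transpose).matrix_mul continuous_id) continuous_const
    have h2 : IsClosed {g : Matrix (Fin N) (Fin N) ℝ | g.det = 1} :=
      isClosed_eq continuous_id.matrix_det continuous_const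
    exact h1.inter h2
  have hbdd : Bornology.IsBounded (SOset N) := by
    refine (Metric.isBounded_closedBall (x := (0 : Matrix (Fin N) (Fin N) ℝ)) (r := 1)).subset ?_
    intro g hg
    rw [Metric.mem_closedBall, dist_zero_right]
    refine pi_norm_le_iff_of_nonneg zero_le_one |>.2 fun i => ?_
    refine pi_norm_le_iff_of_nonneg zero_le_one |>.2 fun j => ?_
    rw [Real.norm_eq_abs]
    have hsq : g i j * g i j ≤ 1 := by
      have hentry : (gᵀ * g) j j = 1 := by rw [hg.1, Matrix.one_apply_eq]
      rw [Matrix.mul_apply] at hentry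
      simp only [Matrix.transpose_apply] at hentry
      calc g i j * g i j ≤ ∑ k, g k j * g k j :=
            Finset.single_le_sum (f := fun k => g k j * g k j)
              (fun k _ => mul_self_nonneg _) (Finset.mem_univ i)
        _ = 1 := hentry
    exact abs_le_one_iff_mul_self_le_one.2 hsq
  exact Metric.isCompact_of_isClosed_isBounded hclosed hbdd

lemma exists_finite_cover :
    ∃ t : Finset (SOset N),
      SOset N ⊆ ⋃ g ∈ t, {w | (1 + (g : Matrix (Fin N) (Fin N) ℝ)ᵀ * w).det ≠ 0} := by
  have hopen : ∀ g : SOset N,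
      IsOpen {w : Matrix (Fin N) (Fin N) ℝ |
        (1 + (g : Matrix (Fin N) (Fin N) ℝ)ᵀ * w).det ≠ 0} := by
    intro g
    have hc : Continuous fun w : Matrix (Fin N) (Fin N) ℝ =>
        (1 + (g : Matrix (Fin N) (Fin N) ℝ)ᵀ * w).det :=
      (continuous_const.add (continuous_const.matrix_mul continuous_id)).matrix_det
    exact isOpen_compl_singleton.preimage hc
  have hcover : SOset N ⊆ ⋃ g : SOset N,
      {w | (1 + (g : Matrix (Fin N) (Fin N) ℝ)ᵀ * w).det ≠ 0} := by
    intro w hw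
    refine Set.mem_iUnion.2 ⟨⟨w, hw⟩, ?_⟩
    have h2 : (1 : Matrix (Fin N) (Fin N) ℝ) + wᵀ * w = (2:ℝ) • 1 := by
      rw [hw.1]; module
    show (1 + wᵀ * w).det ≠ 0
    rw [h2, Matrix.det_smul, Matrix.det_one]
    positivity
  obtain ⟨t, ht⟩ := isCompact_SOset.elim_finite_subcover _ hopen hcover
  exact ⟨t, ht⟩

end soset

section reduction
variable {m : ℕ}

lemma vYvT_eq (b c : ℝ) (v : Matrix (Fin (m+1)) (Fin (m+1)) ℝ) (hv : vᵀ * v = 1) :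
    v * (Matrix.diagonal fun i : Fin (m+1) => if (i : ℕ) < m then b else c) * vᵀ
      = b • 1 + (c - b) • Matrix.vecMulVec (fun i => v i (Fin.last m))
          (fun i => v i (Fin.last m)) := by
  have hvvT : v * vᵀ = 1 := mul_eq_one_comm.mp hv
  ext i j
  rw [Matrix.mul_apply]
  simp only [Matrix.mul_diagonal, Matrix.transpose_apply]
  have hsplit : ∀ p : Fin (m+1), (if (p : ℕ) < m then b else c)
      = b + (if p = Fin.last m then c - b else 0) := by
    intro p
    by_cases hp : p = Fin.last m
    · subst hp; simp [Fin.val_last]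
    · have hlt : (p : ℕ) < m := by
        have := p.isLt
        have hne : (p : ℕ) ≠ m := fun h => hp (Fin.ext (by simp [h, Fin.val_last]))
        omega
      simp [hlt, hp]
  simp only [hsplit]
  have expand : ∀ p : Fin (m+1),
      v i p * (b + if p = Fin.last m then c - b else 0) * v j p
        = v i p * v j p * b + (if p = Fin.last m then v i p * v j p * (c - b) else 0) := by
    intro p
    split_ifs <;> ring
  rw [Finset.sum_congr rfl fun p _ => expand p, Finset.sum_add_distrib]
  rw [Finset.sum_ite_eq' Finset.univ (Fin.last m) (fun p => v i p * v j p * (c - b))]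
  have hvv : ∑ p, v i p * v j p * b = (v * vᵀ) i j * b := by
    rw [Matrix.mul_apply]
    simp only [Matrix.transpose_apply, Finset.sum_mul]
  rw [hvv, hvvT]
  simp only [Finset.mem_univ, if_true, Matrix.add_apply, Matrix.smul_apply, Matrix.one_apply,
    Matrix.vecMulVec_apply, smul_eq_mul]
  split_ifs <;> ring

lemma col_unit (v : Matrix (Fin (m+1)) (Fin (m+1)) ℝ) (hv : vᵀ * v = 1) :
    ∑ i, v i (Fin.last m) ^ 2 = 1 := by
  have hentry : (vᵀ * v) (Fin.last m) (Fin.last m) = 1 := by rw [hv, Matrix.one_apply_eq]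
  rw [Matrix.mul_apply] at hentry
  simp only [Matrix.transpose_apply] at hentry
  rw [← hentry]
  refine Finset.sum_congr rfl fun i _ => ?_
  ring

lemma vecMulVec_neg_neg (y : Fin (m+1) → ℝ) :
    Matrix.vecMulVec (fun i => - y i) (fun i => - y i) = Matrix.vecMulVec y y := by
  ext i j
  simp [Matrix.vecMulVec_apply]

end reduction


section psi
variable {m : ℕ}

abbrev PSpace (m : ℕ) : Type :=
  (skewIdx (m+1) → ℝ) × (skewIdx (m+1) → ℝ) × (Fin m → ℝ)

noncomputable def psiMap (a b c : ℝ) (g₁ g₂ : Matrix (Fin (m+1)) (Fin (m+1)) ℝ)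
    (p : PSpace m) : Matrix (Fin (m+1)) (Fin (m+1)) ℝ :=
  a • cmap g₁ (skewMap p.1) +
    cmap g₂ (skewMap p.2.1) * (b • 1 + (c - b) • Matrix.vecMulVec (st p.2.2) (st p.2.2))

def domU (m : ℕ) : Set (PSpace m) :=
  {p | (1 + skewMap p.1).det ≠ 0 ∧ (1 + skewMap p.2.1).det ≠ 0}

lemma contDiffAt_psiMap (a b c : ℝ) (g₁ g₂ : Matrix (Fin (m+1)) (Fin (m+1)) ℝ)
    (p : PSpace m) (hp : p ∈ domU m) :
    ContDiffAt ℝ 1 (psiMap a b c g₁ g₂) p := by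
  classical
  have hone : ∀ i j, ContDiff ℝ 1 fun x : skewIdx (m+1) → ℝ => (1 + skewMap x) i j := by
    intro i j
    simp_rw [Matrix.add_apply]
    exact contDiff_const.add (contDiff_skewMap_entry i j)
  have hsub : ∀ i j, ContDiff ℝ 1 fun x : skewIdx (m+1) → ℝ => (1 - skewMap x) i j := by
    intro i j
    simp_rw [Matrix.sub_apply]
    exact contDiff_const.sub (contDiff_skewMap_entry i j)
  have hdetc : ContDiff ℝ 1 fun x : skewIdx (m+1) → ℝ => (1 + skewMap x).det :=
    contDiff_det' hone
  have hcmapAt : ∀ (g : Matrix (Fin (m+1)) (Fin (m+1)) ℝ) (x₀ : skewIdx (m+1) → ℝ),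
      (1 + skewMap x₀).det ≠ 0 → ∀ i j,
      ContDiffAt ℝ 1 (fun x => cmap g (skewMap x) i j) x₀ := by
    intro g x₀ hx i j
    have hpoly : ContDiff ℝ 1 fun x : skewIdx (m+1) → ℝ =>
        (g * ((1 - skewMap x) * (1 + skewMap x).adjugate)) i j :=
      contDiff_mul_entry (f := fun _ => g) (fun _ _ => contDiff_const)
        (fun i' j' => contDiff_mul_entry hsub (contDiff_adjugate_entry hone) i' j') i j
    have he : (fun x => cmap g (skewMap x) i j)
        = fun x => ((1 + skewMap x).det)⁻¹ *
            (g * ((1 - skewMap x) * (1 + skewMap x).adjugate)) i j := by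
      funext x
      simp [cmap, Matrix.smul_apply, smul_eq_mul]
    rw [he]
    exact ((contDiffAt_inv ℝ hx).comp x₀ hdetc.contDiffAt).mul hpoly.contDiffAt
  refine contDiffAt_pi.2 fun i => contDiffAt_pi.2 fun j => ?_
  have he : (fun q : PSpace m => psiMap a b c g₁ g₂ q i j)
      = fun q : PSpace m => a * cmap g₁ (skewMap q.1) i j
          + ∑ kk, cmap g₂ (skewMap q.2.1) i kk *
              (b * (1 : Matrix (Fin (m+1)) (Fin (m+1)) ℝ) kk j
                + (c - b) * (st q.2.2 kk * st q.2.2 j)) := by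
    funext q
    simp only [psiMap, Matrix.add_apply, Matrix.smul_apply, smul_eq_mul, Matrix.mul_apply,
      Matrix.vecMulVec_apply]
  rw [he]
  refine ContDiffAt.add ?_ (ContDiffAt.sum fun kk _ => ContDiffAt.mul ?_ ?_)
  · exact contDiffAt_const.mul
      ((hcmapAt g₁ p.1 hp.1 i j).comp p contDiff_fst.contDiffAt)
  · exact (hcmapAt g₂ p.2.1 hp.2 i kk).comp p
      (contDiff_fst.comp contDiff_snd).contDiffAt
  · refine ContDiffAt.add contDiffAt_const ?_
    refine contDiffAt_const.mul (ContDiffAt.mul ?_ ?_)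
    · exact ((contDiff_st_entry kk).comp (contDiff_snd.comp contDiff_snd)).contDiffAt
    · exact ((contDiff_st_entry j).comp (contDiff_snd.comp contDiff_snd)).contDiffAt

end psi


lemma main_aux (m : ℕ) (a b c : ℝ) :
    interior {Z : Matrix (Fin (m+1)) (Fin (m+1)) ℝ |
        ∃ k u v : Matrix (Fin (m+1)) (Fin (m+1)) ℝ,
          kᵀ * k = 1 ∧ k.det = 1 ∧ uᵀ * u = 1 ∧ u.det = 1 ∧ vᵀ * v = 1 ∧ v.det = 1 ∧
          Z = a • k + u * (Matrix.diagonal fun i : Fin (m+1) =>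
            if (i : ℕ) < m then b else c) * vᵀ} = ∅ := by
  classical
  obtain ⟨t, ht⟩ := exists_finite_cover (N := m+1)
  set S := {Z : Matrix (Fin (m+1)) (Fin (m+1)) ℝ |
        ∃ k u v : Matrix (Fin (m+1)) (Fin (m+1)) ℝ,
          kᵀ * k = 1 ∧ k.det = 1 ∧ uᵀ * u = 1 ∧ u.det = 1 ∧ vᵀ * v = 1 ∧ v.det = 1 ∧
          Z = a • k + u * (Matrix.diagonal fun i : Fin (m+1) =>
            if (i : ℕ) < m then b else c) * vᵀ} with hS_def
  -- coverage
  have hcov : S ⊆ ⋃ g₁ ∈ t, ⋃ g₂ ∈ t,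
      psiMap a b c (g₁ : Matrix (Fin (m+1)) (Fin (m+1)) ℝ)
        (g₂ : Matrix (Fin (m+1)) (Fin (m+1)) ℝ) '' domU m := by
    rintro Z ⟨k, u, v, hk1, hk2, hu1, hu2, hv1, hv2, hZeq⟩
    have hkSO : k ∈ SOset (m+1) := ⟨hk1, hk2⟩
    set w := u * vᵀ with hw_def
    have hvvT : v * vᵀ = 1 := mul_eq_one_comm.mp hv1
    have hw1 : wᵀ * w = 1 := by
      calc wᵀ * w = v * (uᵀ * u) * vᵀ := by
            simp only [hw_def, Matrix.transpose_mul, Matrix.transpose_transpose,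
              Matrix.mul_assoc]
        _ = 1 := by rw [hu1, Matrix.mul_one, hvvT]
    have hw2 : w.det = 1 := by
      rw [hw_def, Matrix.det_mul, Matrix.det_transpose, hu2, hv2, mul_one]
    have hwSO : w ∈ SOset (m+1) := ⟨hw1, hw2⟩
    obtain ⟨g₁, hg₁t, hg₁⟩ := Set.mem_iUnion₂.1 (ht hkSO)
    obtain ⟨g₂, hg₂t, hg₂⟩ := Set.mem_iUnion₂.1 (ht hwSO)
    obtain ⟨A₁, hA₁skew, hA₁det, hA₁cm⟩ :=
      cmap_surj (g₁ : Matrix (Fin (m+1)) (Fin (m+1)) ℝ) k g₁.2.1 hk1 hg₁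
    obtain ⟨x₁, hx₁⟩ := skewMap_surj A₁ hA₁skew
    obtain ⟨A₂, hA₂skew, hA₂det, hA₂cm⟩ :=
      cmap_surj (g₂ : Matrix (Fin (m+1)) (Fin (m+1)) ℝ) w g₂.2.1 hw1 hg₂
    obtain ⟨x₂, hx₂⟩ := skewMap_surj A₂ hA₂skew
    set y₀ : Fin (m+1) → ℝ := fun i => v i (Fin.last m) with hy₀_def
    have hy₀ : ∑ i, y₀ i ^ 2 = 1 := col_unit v hv1
    have hz : ∃ z : Fin m → ℝ,
        Matrix.vecMulVec (st z) (st z) = Matrix.vecMulVec y₀ y₀ := by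
      by_cases hyl : y₀ (Fin.last m) = 1
      · have hy' : ∑ i, (- y₀ i) ^ 2 = 1 := by simpa [neg_pow] using hy₀
        obtain ⟨z, hzeq⟩ := st_surj (fun i => - y₀ i) hy' (by show - y₀ (Fin.last m) ≠ 1; rw [hyl]; norm_num)
        exact ⟨z, by rw [hzeq, vecMulVec_neg_neg]⟩
      · obtain ⟨z, hzeq⟩ := st_surj y₀ hy₀ hyl
        exact ⟨z, by rw [hzeq]⟩
    obtain ⟨z, hzvv⟩ := hz
    refine Set.mem_iUnion₂.2 ⟨g₁, hg₁t, Set.mem_iUnion₂.2 ⟨g₂, hg₂t,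
      ⟨(x₁, x₂, z), ⟨by rw [hx₁]; exact hA₁det, by rw [hx₂]; exact hA₂det⟩, ?_⟩⟩⟩
    -- value computation
    have hred : u * (Matrix.diagonal fun i : Fin (m+1) =>
        if (i : ℕ) < m then b else c) * vᵀ
          = w * (b • 1 + (c - b) • Matrix.vecMulVec y₀ y₀) := by
      have hwv : w * v = u := by
        rw [hw_def, Matrix.mul_assoc, mul_eq_one_comm.mpr hvvT, Matrix.mul_one]
      calc u * (Matrix.diagonal fun i : Fin (m+1) => if (i : ℕ) < m then b else c) * vᵀ
          = w * (v * (Matrix.diagonal fun i : Fin (m+1) =>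
              if (i : ℕ) < m then b else c) * vᵀ) := by
            rw [← hwv]
            simp only [Matrix.mul_assoc]
        _ = w * (b • 1 + (c - b) • Matrix.vecMulVec y₀ y₀) := by
            rw [vYvT_eq b c v hv1]
    show psiMap a b c (g₁ : Matrix (Fin (m+1)) (Fin (m+1)) ℝ)
        (g₂ : Matrix (Fin (m+1)) (Fin (m+1)) ℝ) (x₁, x₂, z) = Z
    rw [hZeq, hred]
    unfold psiMap
    simp only [hx₁, hx₂, hA₁cm, hA₂cm, hzvv]
  -- dimension bound
  have hPfin : finrank ℝ (PSpace m) < finrank ℝ (Matrix (Fin (m+1)) (Fin (m+1)) ℝ) := by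
    have hcard : Fintype.card (skewIdx (m+1)) * 2 = (m+1) * m := by
      rw [Fintype.card_sigma]
      simp only [Fintype.card_fin]
      rw [Fin.sum_univ_eq_sum_range (fun i => i) (m+1), Finset.sum_range_id_mul_two]
      simp
    have h1 : finrank ℝ (PSpace m)
        = Fintype.card (skewIdx (m+1)) + (Fintype.card (skewIdx (m+1)) + m) := by
      simp [Module.finrank_prod, Module.finrank_pi]
    have h2 : finrank ℝ (Matrix (Fin (m+1)) (Fin (m+1)) ℝ) = (m+1) * (m+1) := by
      rw [Module.finrank_matrix]
      simp [Fintype.card_fin]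
    rw [h1, h2]
    nlinarith [hcard]
  rw [interior_eq_empty_iff_dense_compl]
  apply dense_compl_of_dimH_lt_finrank
  have hbound : ∀ g₁ g₂ : SOset (m+1),
      dimH (psiMap a b c (g₁ : Matrix (Fin (m+1)) (Fin (m+1)) ℝ)
        (g₂ : Matrix (Fin (m+1)) (Fin (m+1)) ℝ) '' domU m)
        ≤ (finrank ℝ (PSpace m) : ℝ≥0∞) := by
    intro g₁ g₂
    have h1 : dimH (psiMap a b c (g₁ : Matrix (Fin (m+1)) (Fin (m+1)) ℝ)
        (g₂ : Matrix (Fin (m+1)) (Fin (m+1)) ℝ) '' domU m) ≤ dimH (domU m) := by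
      refine dimH_image_le_of_locally_lipschitzOn fun p hp => ?_
      obtain ⟨K, t', ht', hl⟩ := (contDiffAt_psiMap a b c _ _ p hp).exists_lipschitzOnWith
      exact ⟨K, t', mem_nhdsWithin_of_mem_nhds ht', hl⟩
    refine h1.trans ?_
    have h2 : dimH (domU m) ≤ dimH (Set.univ : Set (PSpace m)) :=
      dimH_mono (Set.subset_univ _)
    rwa [Real.dimH_univ_eq_finrank] at h2
  calc dimH S ≤ dimH (⋃ g₁ ∈ t, ⋃ g₂ ∈ t,
        psiMap a b c (g₁ : Matrix (Fin (m+1)) (Fin (m+1)) ℝ)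
          (g₂ : Matrix (Fin (m+1)) (Fin (m+1)) ℝ) '' domU m) := dimH_mono hcov
    _ ≤ (finrank ℝ (PSpace m) : ℝ≥0∞) := by
        simp only [← Finset.mem_coe]
        rw [dimH_bUnion t.countable_toSet]
        refine iSup₂_le fun g₁ _ => ?_
        rw [dimH_bUnion t.countable_toSet]
        exact iSup₂_le fun g₂ _ => hbound g₁ g₂
    _ < (finrank ℝ (Matrix (Fin (m+1)) (Fin (m+1)) ℝ) : ℝ≥0∞) := by
        exact_mod_cast hPfin

end ExceptionalPairAux


theorem exceptional_pair_SUn_SUn1_empty_interior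
    (n : ℕ) (hn : 3 ≤ n) (a b c : ℝ) (ha : a ≠ 0) (hb : b ≠ 0)
    (hcb : c ≠ b) (hcb' : c ≠ -b)
    (Y : Matrix (Fin n) (Fin n) ℝ)
    (hY : Y = Matrix.diagonal fun i : Fin n => if (i : ℕ) < n - 1 then b else c) :
    interior {Z : Matrix (Fin n) (Fin n) ℝ |
        ∃ k u v : Matrix (Fin n) (Fin n) ℝ,
          kᵀ * k = 1 ∧ k.det = 1 ∧ uᵀ * u = 1 ∧ u.det = 1 ∧ vᵀ * v = 1 ∧ v.det = 1 ∧
          Z = a • k + u * Y * vᵀ} = ∅ := by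
  obtain ⟨m, rfl⟩ : ∃ m, n = m + 1 := ⟨n - 1, by omega⟩
  subst hY
  simp only [Nat.add_sub_cancel]
  exact ExceptionalPairAux.main_aux m a b c
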